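/- If (n_1,...,n_k) ∈ Z_k is a tuple of positive integers with k ≥ 3 and hgt(n) ≥ 1, then n contains at least one entry n_j equal to 1 with 1 < j < k (i.e., an interior entry equal to 1) unless n = u_k = (1,2,...,2,1). -/

import Mathlib

/-- Hirzebruch–Jung continued fraction `[n₁,…,n_k] = n₁ - 1/(n₂ - 1/(⋯ - 1/n_k))`,
evaluated from the right (with the convention `(0 : ℚ)⁻¹ = 0`, so `hjcf [n] = n`). -/
def hjcf : List ℤ → ℚ
  | [] => 0
  | a :: l => (a : ℚ) - (hjcf l)⁻¹

/-- A tuple is admissible if all intermediate denominators `[n_j,…,n_k]` (for `j ≥ 2`)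
are positive. -/
def Admissible (l : List ℤ) : Prop :=
  ∀ j : ℕ, 1 ≤ j → j < l.length → 0 < hjcf (l.drop j)

/-- Strict blowup at the `j`-th term (1-indexed): for `j ≤ r-1` it maps
`(n₁,…,n_r)` to `(n₁,…,n_{j-1}, n_j+1, 1, n_{j+1}+1, …, n_r)`;
for `j = r` it maps `(n₁,…,n_r)` to `(n₁,…,n_{r-1}, n_r+1, 1)`. -/
def psi : ℕ → List ℤ → List ℤ
  | 0, l => l
  | 1, [] => []
  | 1, [a] => [a + 1, 1]
  | 1, a :: b :: t => (a + 1) :: 1 :: (b + 1) :: t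
  | _ + 2, [] => []
  | j + 2, a :: t => a :: psi (j + 1) t

/-- `ReachesIn s a b` : `b` is obtained from `a` by a sequence of `s` strict blowups. -/
inductive ReachesIn : ℕ → List ℤ → List ℤ → Prop
  | refl (l : List ℤ) : ReachesIn 0 l l
  | step {s : ℕ} {a b : List ℤ} (j : ℕ) (hj : 1 ≤ j) (hj' : j ≤ b.length) :
      ReachesIn s a b → ReachesIn (s + 1) a (psi j b)

/-- `uTuple l = (1,2,…,2,1)` of length `l ≥ 2`; `uTuple 1 = (0)`. -/
def uTuple (l : ℕ) : List ℤ :=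
  if l ≤ 1 then [0] else 1 :: (List.replicate (l - 2) 2 ++ [1])

/-- Height: the minimal number of strict blowups needed to reach `n` from some `uTuple l`. -/
noncomputable def hgt (n : List ℤ) : ℕ :=
  sInf {s | ∃ l : ℕ, 1 ≤ l ∧ ReachesIn s (uTuple l) n}

/-- Derived tuple ("new framings after handle slides"): `n'_k = n_k` and
`n'_i = n_i + n'_{i+1} - 2`. -/
def derived : List ℤ → List ℤ
  | [] => []
  | [a] => [a]
  | a :: b :: t => (a + (derived (b :: t)).headI - 2) :: derived (b :: t)

/-- Strict blowdown at the `(j+1)`-st term (the left inverse of `psi j`): it deletes the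
entry at the `(j+1)`-st position and subtracts 1 from each adjacent incremented entry. -/
def bd : ℕ → List ℤ → List ℤ
  | 0, l => l
  | 1, [] => []
  | 1, [a] => [a]
  | 1, [a, _] => [a - 1]
  | 1, a :: _ :: c :: t => (a - 1) :: (c - 1) :: t
  | _ + 2, [] => []
  | j + 2, a :: t => a :: bd (j + 1) t

/-- One strict blowdown at the leftmost possible `1` (an entry `1` not in the first
position); if there is none, do nothing. -/
def leftmostOneStep (l : List ℤ) : List ℤ :=
  match (l.drop 1).findIdx? (fun x => x == 1) with
  | some i => bd (i + 1) l
  | none => l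

/-- A positive tuple in `Z_k` (`k ≥ 3`) of height at least 1 contains an interior entry
equal to `1`, unless it equals `u_k = (1,2,…,2,1)`. -/
lemma hjcf_tail_ge_one (l : List ℤ) : l ≠ [] →
    (∀ x ∈ l.dropLast, 2 ≤ x) → (∀ x, l.getLast? = some x → 1 ≤ x) →
    1 ≤ hjcf l ∧ (hjcf l = 1 → l = List.replicate (l.length - 1) 2 ++ [1]) := by
  induction l with
  | nil => intro h; exact absurd rfl h
  | cons a l ih =>
    intro _ h2 hlast
    cases l with
    | nil =>
      have ha : 1 ≤ a := hlast a (by simp)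
      have ha' : (1 : ℚ) ≤ (a : ℚ) := by exact_mod_cast ha
      constructor
      · simp [hjcf]; linarith
      · intro h1
        simp [hjcf] at h1
        have : a = 1 := by exact_mod_cast h1
        simp [this]
    | cons b t =>
      have ha : 2 ≤ a := h2 a (by simp)
      have ha' : (2 : ℚ) ≤ (a : ℚ) := by exact_mod_cast ha
      have h2'' : ∀ x ∈ (b :: t).dropLast, 2 ≤ x := by
        intro x hx
        apply h2
        have : (a :: b :: t).dropLast = a :: (b :: t).dropLast := by
          simp [List.dropLast_cons₂]
        rw [this]; exact List.mem_cons_of_mem _ hx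
      have hlast' : ∀ x, (b :: t).getLast? = some x → 1 ≤ x := by
        intro x hx; exact hlast x (by rwa [List.getLast?_cons_cons])
      obtain ⟨hr, heq⟩ := ih (by simp) h2'' hlast'
      have hr0 : (0 : ℚ) < hjcf (b :: t) := lt_of_lt_of_le one_pos hr
      have hmul : hjcf (b :: t) * (hjcf (b :: t))⁻¹ = 1 := mul_inv_cancel₀ (ne_of_gt hr0)
      have hinvpos : 0 < (hjcf (b :: t))⁻¹ := inv_pos.mpr hr0
      have hinvle : (hjcf (b :: t))⁻¹ ≤ 1 := by nlinarith
      constructor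
      · show 1 ≤ (a : ℚ) - (hjcf (b :: t))⁻¹
        linarith
      · intro h1
        have h1' : (a : ℚ) - (hjcf (b :: t))⁻¹ = 1 := h1
        have haa : (a : ℚ) = 2 := by linarith
        have ha2 : a = 2 := by exact_mod_cast haa
        have hinv1 : (hjcf (b :: t))⁻¹ = 1 := by linarith
        have hr1 : hjcf (b :: t) = 1 := by
          rw [inv_eq_one] at hinv1; exact hinv1
        have hbt := heq hr1
        have hlen : (b :: t).length - 1 = t.length := by simp
        rw [hlen] at hbt
        have : (a :: b :: t).length - 1 = t.length + 1 := by simp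
        rw [this, List.replicate_succ, ha2, List.cons_append]
        rw [hbt]

theorem exists_interior_one (n : List ℤ) (k : ℕ) (hk : n.length = k) (hk3 : 3 ≤ k)
    (hpos : ∀ x ∈ n, 0 < x) (hadm : Admissible n) (hcf : hjcf n = 0)
    (hhgt : 1 ≤ hgt n) :
    n = uTuple k ∨ ∃ j : ℕ, 1 ≤ j ∧ j < k - 1 ∧ n.getD j 0 = 1 := by
  by_cases hone : ∃ j : ℕ, 1 ≤ j ∧ j < k - 1 ∧ n.getD j 0 = 1
  · exact Or.inr hone
  push_neg at hone
  left
  obtain ⟨a, l, rfl⟩ : ∃ a l, n = a :: l := by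
    cases n with
    | nil => simp at hk; omega
    | cons a l => exact ⟨a, l, rfl⟩
  have hlen : l.length = k - 1 := by simp at hk; omega
  have hlne : l ≠ [] := by
    intro h; rw [h] at hlen; simp at hlen; omega
  -- entries of l.dropLast are ≥ 2
  have h2 : ∀ x ∈ l.dropLast, 2 ≤ x := by
    intro x hx
    obtain ⟨i, hi, hix⟩ := List.mem_iff_getElem.mp hx
    have hi' : i < l.length - 1 := by simpa using hi
    have hgx : l.dropLast[i] = l[i]'(by omega) := List.getElem_dropLast hi
    have hmem : x ∈ a :: l := by
      rw [← hix, hgx]; exact List.mem_cons_of_mem _ (List.getElem_mem _)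
    have hxpos : 0 < x := hpos x hmem
    have hne1 : (a :: l).getD (i + 1) 0 ≠ 1 := hone (i + 1) (by omega) (by omega)
    have hgd : (a :: l).getD (i + 1) 0 = l[i]'(by omega) := by
      simp only [List.getD_cons_succ]
      exact List.getD_eq_getElem l 0 (by omega)
    rw [hgd, ← hgx, hix] at hne1
    omega
  have hlast : ∀ x, l.getLast? = some x → 1 ≤ x := by
    intro x hx
    have hmem : x ∈ l := by
      obtain ⟨h, rfl⟩ := List.mem_getLast?_eq_getLast (Option.mem_def.mpr hx)
      exact List.getLast_mem h
    have := hpos x (List.mem_cons_of_mem _ hmem)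
    omega
  obtain ⟨hr, heq⟩ := hjcf_tail_ge_one l hlne h2 hlast
  have hcf' : (a : ℚ) - (hjcf l)⁻¹ = 0 := hcf
  have ha : 1 ≤ a := hpos a (List.mem_cons_self)
  have ha' : (1 : ℚ) ≤ (a : ℚ) := by exact_mod_cast ha
  have hr0 : (0 : ℚ) < hjcf l := lt_of_lt_of_le one_pos hr
  have hmul : hjcf l * (hjcf l)⁻¹ = 1 := mul_inv_cancel₀ (ne_of_gt hr0)
  have hinvle : (hjcf l)⁻¹ ≤ 1 := by nlinarith
  have haa : (a : ℚ) = 1 := le_antisymm (by linarith) ha'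
  have ha1 : a = 1 := by exact_mod_cast haa
  have hinv1 : (hjcf l)⁻¹ = 1 := by linarith
  have hr1 : hjcf l = 1 := by rwa [inv_eq_one] at hinv1
  have hl := heq hr1
  rw [hlen] at hl
  have : k - 1 - 1 = k - 2 := by omega
  rw [this] at hl
  rw [uTuple, if_neg (by omega), ha1, hl]
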